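/- Let l be an association list of (key × β) pairs whose key list is prefix-free and strictly increasing in the lexicographic order, let k be a key that does not occur among the keys of l and such that {k} together with the keys of l is prefix-free, and let v : β. Then there exists exactly one association list l' whose key list is prefix-free and strictly increasing in the lexicographic order such that lookup(l', k) = Some v and lookup(l', k') = lookup(l, k') for every key k' ≠ k. -/

import Mathlib

/-- A side is `L` or `R`. -/
inductive Side : Type
  | L | R
deriving DecidableEq, Repr

/-- A key is a list of sides. -/
abbrev Key := List Side

/-- The strict order `L < R` on sides. -/
def Side.lt : Side → Side → Prop := fun a b => a = Side.L ∧ b = Side.R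

/-- The strict lexicographic order on keys induced by `L < R`. -/
def keyLt : Key → Key → Prop := List.Lex Side.lt

/-- A list of keys is prefix-free: for any two distinct keys in it,
neither is a prefix of the other. -/
def PrefixFreeList (ks : List Key) : Prop :=
  List.Pairwise (fun a b => ¬ a <+: b ∧ ¬ b <+: a) ks

/-- A set of keys is prefix-free. -/
def PrefixFreeSet (S : Set Key) : Prop :=
  ∀ a ∈ S, ∀ b ∈ S, a ≠ b → ¬ a <+: b

/-- A list of keys is strictly increasing in the lexicographic order. -/
def SortedKeys (ks : List Key) : Prop := List.Pairwise keyLt ks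

/-- Key list of an association list is prefix-free and strictly increasing. -/
def GoodKeyList (ks : List Key) : Prop := PrefixFreeList ks ∧ SortedKeys ks

/-- Prepend the key `s` to the key of every entry. -/
def prependAll {β : Type _} (s : Key) (l : List (Key × β)) : List (Key × β) :=
  l.map (fun e => (s ++ e.1, e.2))

/-- `lookup l k` is `some` of the value of the first entry of `l` with key `k`. -/
def lookupA {β : Type _} (l : List (Key × β)) (k : Key) : Option β :=
  (l.find? (fun e => decide (e.1 = k))).map Prod.snd

instance : IsStrictTotalOrder Side Side.lt where
  trichotomous a b := by cases a <;> cases b <;> simp [Side.lt]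
  irrefl a := by cases a <;> simp [Side.lt]
  trans a b c := by cases a <;> cases b <;> cases c <;> simp [Side.lt]

theorem keyLt_sto : IsStrictTotalOrder Key keyLt := by
  unfold keyLt
  exact { trichotomous := (List.Lex.trichotomous Side.lt).trichotomous
          irrefl := fun a h => (List.Lex.asymm Side.lt).asymm a a h h
          trans := fun _ _ _ h1 h2 => List.lex_trans (fun h1 h2 => IsTrans.trans _ _ _ h1 h2) h1 h2 }

theorem keyLt_trans {a b c : Key} (h1 : keyLt a b) (h2 : keyLt b c) : keyLt a c :=
  keyLt_sto.trans a b c h1 h2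
theorem keyLt_irrefl (a : Key) : ¬ keyLt a a := keyLt_sto.irrefl a
theorem keyLt_or {a b : Key} (h : a ≠ b) : keyLt a b ∨ keyLt b a := by
  rcases (haveI := keyLt_sto; trichotomous_of keyLt a b) with h1|h1|h1
  · exact Or.inl h1
  · exact absurd h1 h
  · exact Or.inr h1
theorem keyLt_ne {a b : Key} (h : keyLt a b) : a ≠ b := by
  rintro rfl; exact keyLt_irrefl a h

instance : DecidableRel Side.lt := fun a b => by unfold Side.lt; infer_instance
instance : DecidableRel keyLt := fun a b =>
  inferInstanceAs (Decidable (List.Lex Side.lt a b))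

theorem pf_of_nodup {ks : List Key} (S : Set Key) (hS : PrefixFreeSet S)
    (hsub : ∀ x ∈ ks, x ∈ S) (hnd : ks.Nodup) : PrefixFreeList ks := by
  induction ks with
  | nil => exact List.Pairwise.nil
  | cons a t ih =>
    rw [List.nodup_cons] at hnd
    refine List.Pairwise.cons ?_ (ih (fun x hx => hsub x (List.mem_cons_of_mem _ hx)) hnd.2)
    intro b hb
    have hne : a ≠ b := fun he => hnd.1 (he ▸ hb)
    have haS := hsub a List.mem_cons_self
    have hbS := hsub b (List.mem_cons_of_mem _ hb)
    exact ⟨hS a haS b hbS hne, hS b hbS a haS hne.symm⟩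

def insertA {β : Type _} (k : Key) (v : β) : List (Key × β) → List (Key × β)
  | [] => [(k, v)]
  | e :: t => if keyLt k e.1 then (k, v) :: e :: t else e :: insertA k v t

theorem lookupA_nil {β : Type _} (k : Key) : lookupA ([] : List (Key × β)) k = none := rfl

theorem lookupA_cons {β : Type _} (e : Key × β) (t : List (Key × β)) (k : Key) :
    lookupA (e :: t) k = if e.1 = k then some e.2 else lookupA t k := by
  by_cases h : e.1 = k
  · simp [lookupA, List.find?_cons_of_pos, h]
  · simp [lookupA, List.find?_cons_of_neg, h]

theorem mem_keys_insertA {β : Type _} (k : Key) (v : β) (l : List (Key × β)) (x : Key) :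
    x ∈ (insertA k v l).map Prod.fst ↔ x = k ∨ x ∈ l.map Prod.fst := by
  induction l with
  | nil => simp [insertA]
  | cons e t ih =>
    by_cases h : keyLt k e.1
    · simp [insertA, h]
    · simp [insertA, h, ih]
      tauto

theorem lookupA_eq_none {β : Type _} {l : List (Key × β)} {k : Key}
    (h : k ∉ l.map Prod.fst) : lookupA l k = none := by
  induction l with
  | nil => rfl
  | cons e t ih =>
    simp only [List.map_cons, List.mem_cons, not_or] at h
    rw [lookupA_cons, if_neg (fun he => h.1 he.symm)]
    exact ih h.2

theorem lookupA_insertA_self {β : Type _} (k : Key) (v : β) (l : List (Key × β))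
    (hk : k ∉ l.map Prod.fst) : lookupA (insertA k v l) k = some v := by
  induction l with
  | nil => simp [insertA, lookupA_cons]
  | cons e t ih =>
    simp only [List.map_cons, List.mem_cons, not_or] at hk
    by_cases h : keyLt k e.1
    · simp [insertA, h, lookupA_cons]
    · rw [show insertA k v (e :: t) = e :: insertA k v t by simp [insertA, h],
        lookupA_cons, if_neg (fun he => hk.1 he.symm)]
      exact ih hk.2

theorem lookupA_insertA_ne {β : Type _} (k : Key) (v : β) (l : List (Key × β))
    {k' : Key} (h : k' ≠ k) : lookupA (insertA k v l) k' = lookupA l k' := by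
  induction l with
  | nil =>
    rw [show insertA k v ([] : List (Key × β)) = [(k, v)] from rfl,
      lookupA_cons, if_neg (fun he => h he.symm)]
  | cons e t ih =>
    by_cases hlt : keyLt k e.1
    · rw [show insertA k v (e :: t) = (k, v) :: e :: t by simp [insertA, hlt],
        lookupA_cons, if_neg (fun he => h he.symm)]
    · rw [show insertA k v (e :: t) = e :: insertA k v t by simp [insertA, hlt],
        lookupA_cons, lookupA_cons, ih]

theorem sorted_insertA {β : Type _} (k : Key) (v : β) (l : List (Key × β))
    (hs : SortedKeys (l.map Prod.fst)) (hk : k ∉ l.map Prod.fst) :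
    SortedKeys ((insertA k v l).map Prod.fst) := by
  induction l with
  | nil => simp [insertA, SortedKeys]
  | cons e t ih =>
    simp only [List.map_cons, List.mem_cons, not_or] at hk
    rw [SortedKeys, List.map_cons, List.pairwise_cons] at hs
    by_cases h : keyLt k e.1
    · rw [show insertA k v (e :: t) = (k, v) :: e :: t by simp [insertA, h]]
      rw [SortedKeys, List.map_cons, List.map_cons, List.pairwise_cons]
      refine ⟨?_, ?_⟩
      · intro x hx
        rcases List.mem_cons.mp hx with rfl | hx
        · exact h
        · exact keyLt_trans h (hs.1 x hx)
      · rw [List.pairwise_cons]; exact hs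
    · have hek : keyLt e.1 k := by
        rcases keyLt_or (show e.1 ≠ k from fun he => hk.1 he.symm) with h1 | h1
        · exact h1
        · exact absurd h1 h
      rw [show insertA k v (e :: t) = e :: insertA k v t by simp [insertA, h]]
      rw [SortedKeys, List.map_cons, List.pairwise_cons]
      refine ⟨?_, ih hs.2 hk.2⟩
      intro x hx
      rcases (mem_keys_insertA k v t x).mp hx with rfl | hx
      · exact hek
      · exact hs.1 x hx

theorem eq_of_lookupA_eq {β : Type _} : ∀ (l₁ l₂ : List (Key × β)),
    SortedKeys (l₁.map Prod.fst) → SortedKeys (l₂.map Prod.fst) →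
    (∀ k, lookupA l₁ k = lookupA l₂ k) → l₁ = l₂ := by
  intro l₁
  induction l₁ with
  | nil =>
    intro l₂ _ _ h
    cases l₂ with
    | nil => rfl
    | cons b t₂ =>
      have := h b.1
      rw [lookupA_nil, lookupA_cons, if_pos rfl] at this
      exact absurd this (by simp)
  | cons a t₁ ih =>
    intro l₂ hs₁ hs₂ h
    cases l₂ with
    | nil =>
      have := h a.1
      rw [lookupA_nil, lookupA_cons, if_pos rfl] at this
      exact absurd this (by simp)
    | cons b t₂ =>
      rw [SortedKeys, List.map_cons, List.pairwise_cons] at hs₁ hs₂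
      have hnt₁ : a.1 ∉ t₁.map Prod.fst := fun hx => keyLt_ne (hs₁.1 _ hx) rfl
      have hnt₂ : b.1 ∉ t₂.map Prod.fst := fun hx => keyLt_ne (hs₂.1 _ hx) rfl
      have hab : a.1 = b.1 := by
        by_contra hne
        rcases keyLt_or hne with h1 | h1
        · have hna : a.1 ∉ (b :: t₂).map Prod.fst := by
            simp only [List.map_cons, List.mem_cons, not_or]
            exact ⟨fun he => keyLt_ne h1 he, fun hx =>
              keyLt_ne (keyLt_trans h1 (hs₂.1 _ hx)) rfl⟩
          have := h a.1
          rw [lookupA_cons, if_pos rfl, lookupA_eq_none hna] at this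
          exact absurd this (by simp)
        · have hnb : b.1 ∉ (a :: t₁).map Prod.fst := by
            simp only [List.map_cons, List.mem_cons, not_or]
            exact ⟨fun he => keyLt_ne h1 he, fun hx =>
              keyLt_ne (keyLt_trans h1 (hs₁.1 _ hx)) rfl⟩
          have := h b.1
          rw [lookupA_eq_none hnb, lookupA_cons, if_pos rfl] at this
          exact absurd this (by simp)
      have hval : a.2 = b.2 := by
        have := h a.1
        rw [lookupA_cons, if_pos rfl, lookupA_cons, if_pos hab.symm] at this
        exact Option.some.inj this
      have htail : t₁ = t₂ := by
        apply ih t₂ hs₁.2 hs₂.2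
        intro k
        by_cases hk : k = a.1
        · subst hk
          rw [lookupA_eq_none hnt₁, lookupA_eq_none (hab ▸ hnt₂)]
        · have := h k
          rw [lookupA_cons, lookupA_cons, if_neg (fun he => hk he.symm),
            if_neg (fun he => hk (hab ▸ he).symm)] at this
          exact this
      rw [htail, Prod.ext hab hval]

/-- given an association list `l` with a prefix-free, strictly
lexicographically increasing key list, a fresh key `k` such that `{k}` together
with the keys of `l` is prefix-free, and a value `v`, there is exactly one
association list `l'` with a prefix-free, strictly increasing key list whose
lookup extends that of `l` by `{k ↦ v}`. -/
theorem stmt12 {β : Type} (l : List (Key × β)) (k : Key) (v : β)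
    (hl : GoodKeyList (l.map Prod.fst))
    (hk : k ∉ l.map Prod.fst)
    (hpf : PrefixFreeSet (insert k {x : Key | x ∈ l.map Prod.fst})) :
    ∃! l' : List (Key × β),
      GoodKeyList (l'.map Prod.fst) ∧
      lookupA l' k = some v ∧
      ∀ k' : Key, k' ≠ k → lookupA l' k' = lookupA l k' := by
  obtain ⟨hpfl, hsl⟩ := hl
  have hsorted := sorted_insertA k v l hsl hk
  have hnodup : ((insertA k v l).map Prod.fst).Nodup :=
    hsorted.imp (fun h => keyLt_ne h)
  have hsub : ∀ x ∈ (insertA k v l).map Prod.fst,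
      x ∈ insert k {x : Key | x ∈ l.map Prod.fst} := by
    intro x hx
    rcases (mem_keys_insertA k v l x).mp hx with rfl | hx
    · exact Set.mem_insert _ _
    · exact Set.mem_insert_of_mem _ hx
  have hpfl' : PrefixFreeList ((insertA k v l).map Prod.fst) :=
    pf_of_nodup _ hpf hsub hnodup
  refine ⟨insertA k v l, ⟨⟨hpfl', hsorted⟩, lookupA_insertA_self k v l hk,
    fun k' h => lookupA_insertA_ne k v l h⟩, ?_⟩
  rintro l' ⟨⟨_, hs'⟩, h1, h2⟩
  apply eq_of_lookupA_eq l' (insertA k v l) hs' hsorted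
  intro k'
  by_cases hkk : k' = k
  · rw [hkk, h1, lookupA_insertA_self k v l hk]
  · rw [h2 k' hkk, lookupA_insertA_ne k v l hkk]
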